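/- For any finite directed graph G with minimal fibration base B, the input tree of any node u of G is isomorphic to the input tree of its fiber [u] in B; consequently, G and B have the same multiset of input-tree isomorphism types. -/

import Mathlib

/-- A finite directed multigraph: a node type, an edge type, and source/target maps. -/
structure FinDigraph where
  V : Type
  E : Type
  [finV : Finite V]
  [finE : Finite E]
  src : E → V
  tgt : E → V

attribute [instance] FinDigraph.finV FinDigraph.finE

namespace FinDigraph

/-- The far endpoint of a (reversed) path ending at `u`: the list `[e_k, …, e_1]`
represents the directed path `src e_k → ⋯ → tgt e_1 = u`. -/
def farEnd (G : FinDigraph) (u : G.V) : List G.E → G.V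
  | [] => u
  | e :: _ => G.src e

/-- `l = [e_k, …, e_1]` is a directed path of `G` ending at `u`. -/
def IsInPath (G : FinDigraph) (u : G.V) : List G.E → Prop
  | [] => True
  | e :: es => IsInPath G u es ∧ G.tgt e = G.farEnd u es

/-- The nodes of the input tree of `u`: all directed paths ending at `u`. -/
def InPath (G : FinDigraph) (u : G.V) : Type := {l : List G.E // G.IsInPath u l}

/-- The root of the input tree of `u` (the empty path). -/
def root (G : FinDigraph) (u : G.V) : G.InPath u := ⟨[], trivial⟩

/-- The parent of a path in the input tree (drop the farthest edge); the root is its own parent. -/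
def parent (G : FinDigraph) (u : G.V) : G.InPath u → G.InPath u
  | ⟨[], h⟩ => ⟨[], h⟩
  | ⟨_ :: es, h⟩ => ⟨es, h.1⟩

/-- Isomorphism of input trees: a bijection of paths preserving root, depth and parent. -/
def InTreeIso (G : FinDigraph) (u : G.V) (H : FinDigraph) (v : H.V) : Prop :=
  ∃ F : G.InPath u ≃ H.InPath v,
    F (G.root u) = H.root v ∧
    (∀ p, ((F p).1).length = (p.1).length) ∧
    (∀ p, F (G.parent u p) = H.parent v (F p))

/-- The reverse graph (all edges flipped). -/
def rev (G : FinDigraph) : FinDigraph :=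
  { V := G.V, E := G.E, src := G.tgt, tgt := G.src }

/-- Isomorphism of output trees = isomorphism of input trees in the reverse graphs. -/
def OutTreeIso (G : FinDigraph) (u : G.V) (H : FinDigraph) (v : H.V) : Prop :=
  InTreeIso (rev G) u (rev H) v

/-- A homomorphism of directed multigraphs. -/
structure Hom (G H : FinDigraph) where
  onV : G.V → H.V
  onE : G.E → H.E
  map_src : ∀ e, H.src (onE e) = onV (G.src e)
  map_tgt : ∀ e, H.tgt (onE e) = onV (G.tgt e)

/-- Isomorphism of directed multigraphs. -/
def IsIso (G H : FinDigraph) : Prop :=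
  ∃ φ : Hom G H, Function.Bijective φ.onV ∧ Function.Bijective φ.onE

/-- Fibration equivalence of nodes: isomorphic input trees. -/
def fibEquiv (G : FinDigraph) (u v : G.V) : Prop := InTreeIso G u G v

/-- Covering equivalence of nodes: isomorphic input trees and isomorphic output trees. -/
def covEquiv (G : FinDigraph) (u v : G.V) : Prop :=
  InTreeIso G u G v ∧ OutTreeIso G u G v

/-- Orbit equivalence: some automorphism maps one node to the other. -/
def orbitEquiv (G : FinDigraph) (u v : G.V) : Prop :=
  ∃ φ : Hom G G, Function.Bijective φ.onV ∧ Function.Bijective φ.onE ∧ φ.onV u = v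

theorem inTreeIso_refl (G : FinDigraph) (u : G.V) : InTreeIso G u G u :=
  ⟨Equiv.refl _, rfl, fun _ => rfl, fun _ => rfl⟩

theorem inTreeIso_symm {G : FinDigraph} {u : G.V} {H : FinDigraph} {v : H.V}
    (h : InTreeIso G u H v) : InTreeIso H v G u := by
  obtain ⟨F, hroot, hlen, hpar⟩ := h
  refine ⟨F.symm, ?_, ?_, ?_⟩
  · rw [← hroot, Equiv.symm_apply_apply]
  · intro p; rw [← hlen (F.symm p), Equiv.apply_symm_apply]
  · intro p
    apply F.injective
    rw [Equiv.apply_symm_apply, hpar (F.symm p), Equiv.apply_symm_apply]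

theorem inTreeIso_trans {G : FinDigraph} {u : G.V} {H : FinDigraph} {v : H.V}
    {K : FinDigraph} {w : K.V}
    (h₁ : InTreeIso G u H v) (h₂ : InTreeIso H v K w) : InTreeIso G u K w := by
  obtain ⟨F, fr, fl, fp⟩ := h₁
  obtain ⟨F', gr, gl, gp⟩ := h₂
  refine ⟨F.trans F', ?_, ?_, ?_⟩
  · simp [Equiv.trans_apply, fr, gr]
  · intro p; simp [Equiv.trans_apply, gl, fl]
  · intro p; simp [Equiv.trans_apply, fp, gp]

/-- The setoid of fibration equivalence (isomorphism of input trees). -/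
def fibSetoid (G : FinDigraph) : Setoid G.V :=
  ⟨fibEquiv G, ⟨fun u => inTreeIso_refl G u, inTreeIso_symm, inTreeIso_trans⟩⟩

/-- The minimal fibration base of `G`: nodes are the fibers (input-tree isomorphism
classes), and the edges from a fiber `C'` into a fiber `C` are the edges of `G` from
nodes of `C'` into the chosen representative of `C`. -/
def base (G : FinDigraph) : FinDigraph where
  V := Quotient (fibSetoid G)
  E := {e : G.E // G.tgt e = (Quotient.mk (fibSetoid G) (G.tgt e)).out}
  src e := Quotient.mk (fibSetoid G) (G.src e.1)
  tgt e := Quotient.mk (fibSetoid G) (G.tgt e.1)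

/-- The fiber of a node, as a node of the minimal base. -/
def fibClass (G : FinDigraph) (u : G.V) : (base G).V := Quotient.mk (fibSetoid G) u

/-- A partition (given as an equivalence relation) is balanced if any two equivalent
nodes receive the same number of edges from each class. -/
def IsBalanced (G : FinDigraph) (r : G.V → G.V → Prop) : Prop :=
  Equivalence r ∧ ∀ u v, r u v → ∀ w : G.V,
    Nat.card {e : G.E // G.tgt e = u ∧ r (G.src e) w} =
    Nat.card {e : G.E // G.tgt e = v ∧ r (G.src e) w}

/-- The multiset of states of the in-neighbors of `u` (with edge multiplicity). -/
noncomputable def inStates (G : FinDigraph) {S : Type} (x : G.V → S) (u : G.V) :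
    Multiset S :=
  letI := Fintype.ofFinite G.E
  letI := Classical.decEq G.V
  (Finset.univ.filter (fun e => G.tgt e = u)).val.map fun e => x (G.src e)

end FinDigraph

namespace FinDigraph

variable {G H : FinDigraph}

theorem isInPath_append (u : G.V) (l : List G.E) (e : G.E) :
    G.IsInPath u (l ++ [e]) ↔ G.tgt e = u ∧ G.IsInPath (G.src e) l := by
  induction l with
  | nil => simp [IsInPath, farEnd, and_comm]
  | cons a l ih =>
      have hf : G.farEnd u (l ++ [e]) = G.farEnd (G.src e) l := by
        cases l <;> rfl
      simp [IsInPath, ih, hf, and_assoc]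

theorem parent_val (u : G.V) (p : G.InPath u) : (G.parent u p).1 = p.1.tail := by
  obtain ⟨l, h⟩ := p; cases l <;> rfl

theorem parent_iterate_val (u : G.V) (p : G.InPath u) (k : ℕ) :
    ((G.parent u)^[k] p).1 = p.1.drop k := by
  induction k generalizing p with
  | zero => rfl
  | succ k ih =>
      rw [Function.iterate_succ_apply, ih, parent_val]
      rw [← List.drop_one, List.drop_drop]
      ring_nf

/-- The singleton path given by an edge into `u`. -/
def single (e : G.E) (he : G.tgt e = u) : G.InPath u := ⟨[e], trivial, he⟩

/-- Extend a path ending at `src e` by the edge `e` into `u`. -/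
def extend {u : G.V} (e : G.E) (he : G.tgt e = u) (p : G.InPath (G.src e)) : G.InPath u :=
  ⟨p.1 ++ [e], (isInPath_append u p.1 e).mpr ⟨he, p.2⟩⟩

theorem extend_inj {u : G.V} (e : G.E) (he : G.tgt e = u) :
    Function.Injective (extend (u := u) e he) := by
  intro p q h
  exact Subtype.ext (List.append_cancel_right (congrArg Subtype.val h))

theorem F_iterate {u : G.V} {v : H.V} (F : G.InPath u ≃ H.InPath v)
    (hp : ∀ p, F (G.parent u p) = H.parent v (F p)) (k : ℕ) (p : G.InPath u) :
    F ((G.parent u)^[k] p) = (H.parent v)^[k] (F p) := by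
  induction k generalizing p with
  | zero => rfl
  | succ k ih => rw [Function.iterate_succ_apply, Function.iterate_succ_apply, ih, hp]

/-- Key step: a tree isomorphism maps paths extending `e` to paths extending `e'`. -/
theorem exists_extend {u : G.V} {v : H.V} (F : G.InPath u ≃ H.InPath v)
    (hl : ∀ p, ((F p).1).length = (p.1).length)
    (hp : ∀ p, F (G.parent u p) = H.parent v (F p))
    {e : G.E} {e' : H.E} (he : G.tgt e = u) (he' : H.tgt e' = v)
    (hF : F (single e he) = single e' he') (p : G.InPath (G.src e)) :
    ∃ q : H.InPath (H.src e'), F (extend e he p) = extend e' he' q ∧ q.1.length = p.1.length := by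
  set n := p.1.length with hn
  have h1 : (G.parent u)^[n] (extend e he p) = single e he := by
    apply Subtype.ext
    rw [parent_iterate_val]
    show (p.1 ++ [e]).drop n = [e]
    rw [List.drop_left' hn.symm]
  have h2 : ((F (extend e he p)).1).drop n = [e'] := by
    have := F_iterate F hp n (extend e he p)
    rw [h1, hF] at this
    have := congrArg Subtype.val this
    rw [parent_iterate_val] at this
    exact this.symm
  have h3 : ((F (extend e he p)).1).length = n + 1 := by
    rw [hl]; simp [extend]; exact hn.symm
  have h4 : (F (extend e he p)).1 = ((F (extend e he p)).1).take n ++ [e'] := by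
    conv_lhs => rw [← List.take_append_drop n (F (extend e he p)).1]
    rw [h2]
  have h5 : H.IsInPath (H.src e') (((F (extend e he p)).1).take n) ∧ H.tgt e' = v := by
    have := (F (extend e he p)).2
    rw [h4] at this
    have := (isInPath_append v _ e').mp this
    exact ⟨this.2, this.1⟩
  refine ⟨⟨_, h5.1⟩, Subtype.ext h4, ?_⟩
  simp [h3]

theorem parent_extend {u : G.V} (e : G.E) (he : G.tgt e = u) (q : G.InPath (G.src e))
    (hq : q.1 ≠ []) :
    G.parent u (extend e he q) = extend e he (G.parent (G.src e) q) := by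
  obtain ⟨l, h⟩ := q
  cases l with
  | nil => exact absurd rfl hq
  | cons a l => rfl

theorem parent_of_nil {u : G.V} (q : G.InPath u) (hq : q.1 = []) : G.parent u q = q := by
  apply Subtype.ext; rw [parent_val, hq]; rfl

theorem single_val {u : G.V} (e : G.E) (he : G.tgt e = u) : (single e he).1 = [e] := rfl

theorem root_eq {u : G.V} (p : G.InPath u) (h : p.1 = []) : p = G.root u :=
  Subtype.ext h

/-- Restriction of a tree isomorphism to subtrees below corresponding depth-1 nodes. -/
theorem restrict_iso {u : G.V} {v : H.V} (F : G.InPath u ≃ H.InPath v)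
    (hl : ∀ p, ((F p).1).length = (p.1).length)
    (hp : ∀ p, F (G.parent u p) = H.parent v (F p))
    {e : G.E} {e' : H.E} (he : G.tgt e = u) (he' : H.tgt e' = v)
    (hF : F (single e he) = single e' he') :
    InTreeIso G (G.src e) H (H.src e') := by
  -- the symm data
  have hl' : ∀ q, ((F.symm q).1).length = (q.1).length := by
    intro q; rw [← hl (F.symm q), Equiv.apply_symm_apply]
  have hp' : ∀ q, F.symm (H.parent v q) = G.parent u (F.symm q) := by
    intro q; apply F.injective
    rw [Equiv.apply_symm_apply, hp (F.symm q), Equiv.apply_symm_apply]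
  have hF' : F.symm (single e' he') = single e he := by
    rw [← hF, Equiv.symm_apply_apply]
  -- forward and backward maps
  choose Φ hΦ hΦl using exists_extend F hl hp he he' hF
  choose Ψ hΨ hΨl using exists_extend F.symm hl' hp' he' he hF'
  have left : ∀ p, Ψ (Φ p) = p := by
    intro p
    apply extend_inj e he
    rw [← hΨ (Φ p), ← hΦ p, Equiv.symm_apply_apply]
  have right : ∀ q, Φ (Ψ q) = q := by
    intro q
    apply extend_inj e' he'
    rw [← hΦ (Ψ q), ← hΨ q, Equiv.apply_symm_apply]
  refine ⟨⟨Φ, Ψ, left, right⟩, ?_, ?_, ?_⟩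
  · -- root
    apply root_eq
    have h1 : extend e he (G.root (G.src e)) = single e he := Subtype.ext rfl
    have := hΦ (G.root (G.src e))
    rw [h1, hF] at this
    have h2 := congrArg Subtype.val this
    simp [single, extend] at h2
    exact h2
  · exact hΦl
  · -- parent
    intro p
    show Φ (G.parent (G.src e) p) = H.parent (H.src e') (Φ p)
    obtain ⟨l, hlp⟩ := p
    cases l with
    | nil =>
        have h0 : G.parent (G.src e) ⟨[], hlp⟩ = ⟨[], hlp⟩ := rfl
        rw [h0]
        have hΦr : (Φ ⟨[], hlp⟩).1 = [] := by
          have := hΦl ⟨[], hlp⟩; simpa using List.length_eq_zero_iff.mp this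
        exact (parent_of_nil _ hΦr).symm
    | cons a l =>
        apply extend_inj e' he'
        have key : extend e he (G.parent (G.src e) ⟨a :: l, hlp⟩) =
            G.parent u (extend e he ⟨a :: l, hlp⟩) := Subtype.ext rfl
        rw [← hΦ, key, hp]; erw [hΦ]
        exact parent_extend e' he' (Φ ⟨a :: l, hlp⟩) (by
          intro h
          have := hΦl ⟨a :: l, hlp⟩
          rw [h] at this
          simp at this)


theorem exists_single {v : H.V} (q : H.InPath v) (hq : q.1.length = 1) :
    ∃ e' : H.E, ∃ he' : H.tgt e' = v, q = single e' he' := by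
  obtain ⟨l, hl⟩ := q
  simp only at hq
  obtain ⟨a, rfl⟩ := List.length_eq_one_iff.mp hq
  exact ⟨a, hl.2, Subtype.ext rfl⟩

theorem exists_edgeEquiv {u v : G.V} (h : G.fibEquiv u v) :
    ∃ σ : {e : G.E // G.tgt e = u} ≃ {e : G.E // G.tgt e = v},
      ∀ e, G.fibEquiv (G.src e.1) (G.src (σ e).1) := by
  obtain ⟨F, hr, hl, hp⟩ := h
  have hl' : ∀ q, ((F.symm q).1).length = (q.1).length := by
    intro q; rw [← hl (F.symm q), Equiv.apply_symm_apply]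
  have key : ∀ (e : {e : G.E // G.tgt e = u}), ∃ e' : G.E, ∃ he' : G.tgt e' = v,
      F (single e.1 e.2) = single e' he' := by
    intro e
    exact exists_single _ (by rw [hl]; rfl)
  have key' : ∀ (e : {e : G.E // G.tgt e = v}), ∃ e' : G.E, ∃ he' : G.tgt e' = u,
      F.symm (single e.1 e.2) = single e' he' := by
    intro e
    exact exists_single _ (by rw [hl']; rfl)
  choose g hg hFg using key
  choose g' hg' hFg' using key'
  have leftinv : ∀ e : {e : G.E // G.tgt e = u}, g' ⟨g e, hg e⟩ = e.1 := by
    intro e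
    have h1 := hFg' ⟨g e, hg e⟩
    have h2 : F.symm (single (g e) (hg e)) = single e.1 e.2 := by
      rw [← hFg e, Equiv.symm_apply_apply]
    rw [h2] at h1
    have := congrArg Subtype.val h1
    simp only [single, List.cons.injEq] at this
    exact this.1.symm
  have rightinv : ∀ e : {e : G.E // G.tgt e = v}, g ⟨g' e, hg' e⟩ = e.1 := by
    intro e
    have h1 := hFg ⟨g' e, hg' e⟩
    have h2 : F (single (g' e) (hg' e)) = single e.1 e.2 := by
      rw [← hFg' e, Equiv.apply_symm_apply]
    rw [h2] at h1
    have := congrArg Subtype.val h1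
    simp only [single, List.cons.injEq] at this
    exact this.1.symm
  refine ⟨⟨fun e => ⟨g e, hg e⟩, fun e => ⟨g' e, hg' e⟩, ?_, ?_⟩, ?_⟩
  · intro e; exact Subtype.ext (leftinv e)
  · intro e; exact Subtype.ext (rightinv e)
  · intro e
    exact restrict_iso F hl hp e.2 (hg e) (hFg e)

theorem exists_tau (G : FinDigraph) (w : G.V) :
    ∃ τ : {e : G.E // G.tgt e = w} ≃ {f : (base G).E // (base G).tgt f = G.fibClass w},
      ∀ e, (base G).src (τ e).1 = G.fibClass (G.src e.1) := by
  have hfe : G.fibEquiv w ((G.fibClass w).out) := by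
    have h1 : Quotient.mk (fibSetoid G) ((G.fibClass w).out) = Quotient.mk (fibSetoid G) w :=
      (Quotient.out_eq _)
    exact (fibSetoid G).symm (Quotient.exact h1)
  obtain ⟨σ, hσ⟩ := exists_edgeEquiv hfe
  have hout : ∀ e : G.E, G.tgt e = (G.fibClass w).out →
      G.tgt e = (Quotient.mk (fibSetoid G) (G.tgt e)).out := by
    intro e he
    rw [he]; erw [Quotient.out_eq]
  refine ⟨σ.trans ⟨fun e => ⟨⟨e.1, hout e.1 e.2⟩, ?_⟩,
    fun f => ⟨f.1.1, ?_⟩, fun e => Subtype.ext rfl, fun f => Subtype.ext (Subtype.ext rfl)⟩, ?_⟩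
  · show Quotient.mk (fibSetoid G) (G.tgt e.1) = G.fibClass w
    rw [e.2]; erw [Quotient.out_eq]
  · have h1 := f.1.2
    have h2 : Quotient.mk (fibSetoid G) (G.tgt f.1.1) = G.fibClass w := f.2
    rw [h1, h2]
  · intro e
    show Quotient.mk (fibSetoid G) (G.src (σ e).1) = G.fibClass (G.src e.1)
    exact (Quotient.sound (hσ e)).symm

noncomputable def tau (G : FinDigraph) (w : G.V) :
    {e : G.E // G.tgt e = w} ≃ {f : (base G).E // (base G).tgt f = G.fibClass w} :=
  (exists_tau G w).choose

theorem tau_src (G : FinDigraph) (w : G.V) (e : {e : G.E // G.tgt e = w}) :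
    (base G).src ((tau G w) e).1 = G.fibClass (G.src e.1) :=
  (exists_tau G w).choose_spec e

theorem tau_symm_congr (G : FinDigraph) {w w' : G.V} (h : w = w') (f : (base G).E)
    (pf : (base G).tgt f = G.fibClass w) (pf' : (base G).tgt f = G.fibClass w') :
    ((tau G w).symm ⟨f, pf⟩).1 = ((tau G w').symm ⟨f, pf'⟩).1 := by subst h; rfl

noncomputable def lift (G : FinDigraph) (u : G.V) :
    (l : List G.E) → G.IsInPath u l →
      {m : List (base G).E // (base G).IsInPath (G.fibClass u) m ∧
        (base G).farEnd (G.fibClass u) m = G.fibClass (G.farEnd u l) ∧ m.length = l.length}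
  | [], _ => ⟨[], trivial, rfl, rfl⟩
  | e :: es, h =>
      let p := lift G u es h.1
      let f := tau G (G.farEnd u es) ⟨e, h.2⟩
      ⟨f.1 :: p.1,
        ⟨p.2.1, f.2.trans p.2.2.1.symm⟩,
        (tau_src G (G.farEnd u es) ⟨e, h.2⟩ : _),
        congrArg Nat.succ p.2.2.2⟩

noncomputable def unlift (G : FinDigraph) (u : G.V) :
    (m : List (base G).E) → (base G).IsInPath (G.fibClass u) m →
      {l : List G.E // G.IsInPath u l ∧
        G.fibClass (G.farEnd u l) = (base G).farEnd (G.fibClass u) m ∧ l.length = m.length}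
  | [], _ => ⟨[], trivial, rfl, rfl⟩
  | f :: fs, h =>
      let p := unlift G u fs h.1
      let e := (tau G (G.farEnd u p.1)).symm ⟨f, h.2.trans p.2.2.1.symm⟩
      ⟨e.1 :: p.1, ⟨p.2.1, e.2⟩,
        by
          show G.fibClass (G.src e.1) = (base G).src f
          have := tau_src G (G.farEnd u p.1) e
          rw [show (tau G (G.farEnd u p.1)) e = ⟨f, h.2.trans p.2.2.1.symm⟩ from
            Equiv.apply_symm_apply _ _] at this
          exact this.symm,
        congrArg Nat.succ p.2.2.2⟩

theorem lift_cons (G : FinDigraph) (u : G.V) (e : G.E) (es : List G.E)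
    (h : G.IsInPath u (e :: es)) :
    (lift G u (e :: es) h).1 =
      ((tau G (G.farEnd u es)) ⟨e, h.2⟩).1 :: (lift G u es h.1).1 := rfl

theorem unlift_cons (G : FinDigraph) (u : G.V) (f : (base G).E) (fs : List (base G).E)
    (h : (base G).IsInPath (G.fibClass u) (f :: fs))
    (pf : (base G).tgt f = G.fibClass (G.farEnd u (unlift G u fs h.1).1)) :
    (unlift G u (f :: fs) h).1 =
      ((tau G (G.farEnd u (unlift G u fs h.1).1)).symm ⟨f, pf⟩).1 :: (unlift G u fs h.1).1 := rfl

theorem unlift_lift (G : FinDigraph) (u : G.V) (l : List G.E) : ∀ (h : G.IsInPath u l)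
    (h' : (base G).IsInPath (G.fibClass u) (lift G u l h).1),
    (unlift G u (lift G u l h).1 h').1 = l := by
  induction l with
  | nil => intro h h'; rfl
  | cons e es ih =>
      intro h h'
      have hes : (unlift G u (lift G u es h.1).1 h'.1).1 = es := ih h.1 h'.1
      have hw : G.farEnd u (unlift G u (lift G u es h.1).1 h'.1).1 = G.farEnd u es := by
        rw [hes]
      have pf : (base G).tgt ((tau G (G.farEnd u es)) ⟨e, h.2⟩).1 =
          G.fibClass (G.farEnd u (unlift G u (lift G u es h.1).1 h'.1).1) := by
        rw [hw]; exact ((tau G (G.farEnd u es)) ⟨e, h.2⟩).2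
      show (unlift G u (((tau G (G.farEnd u es)) ⟨e, h.2⟩).1 :: (lift G u es h.1).1) h').1 = e :: es
      rw [unlift_cons G u _ _ h' pf]
      congr 1
      rw [tau_symm_congr G hw _ pf (((tau G (G.farEnd u es)) ⟨e, h.2⟩).2)]
      rw [show (⟨((tau G (G.farEnd u es)) ⟨e, h.2⟩).1, ((tau G (G.farEnd u es)) ⟨e, h.2⟩).2⟩ :
        {f : (base G).E // (base G).tgt f = G.fibClass (G.farEnd u es)}) =
        (tau G (G.farEnd u es)) ⟨e, h.2⟩ from Subtype.ext rfl]
      rw [Equiv.symm_apply_apply]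

theorem lift_unlift (G : FinDigraph) (u : G.V) (m : List (base G).E) :
    ∀ (h : (base G).IsInPath (G.fibClass u) m)
    (h' : G.IsInPath u (unlift G u m h).1),
    (lift G u (unlift G u m h).1 h').1 = m := by
  induction m with
  | nil => intro h h'; rfl
  | cons f fs ih =>
      intro h h'
      have hfs : (lift G u (unlift G u fs h.1).1 h'.1).1 = fs := ih h.1 h'.1
      show (lift G u
        (((tau G (G.farEnd u (unlift G u fs h.1).1)).symm
            ⟨f, h.2.trans (unlift G u fs h.1).2.2.1.symm⟩).1 :: (unlift G u fs h.1).1) h').1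
        = f :: fs
      erw [lift_cons]
      refine congrArg₂ List.cons ?_ hfs
      rw [show (⟨((tau G (G.farEnd u (unlift G u fs h.1).1)).symm
          ⟨f, h.2.trans (unlift G u fs h.1).2.2.1.symm⟩).1, h'.2⟩ :
          {e : G.E // G.tgt e = G.farEnd u (unlift G u fs h.1).1}) =
          (tau G (G.farEnd u (unlift G u fs h.1).1)).symm
          ⟨f, h.2.trans (unlift G u fs h.1).2.2.1.symm⟩ from Subtype.ext rfl]
      rw [Equiv.apply_symm_apply]

noncomputable def toBase (G : FinDigraph) (u : G.V) :
    G.InPath u ≃ (base G).InPath (G.fibClass u) where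
  toFun p := ⟨(lift G u p.1 p.2).1, (lift G u p.1 p.2).2.1⟩
  invFun q := ⟨(unlift G u q.1 q.2).1, (unlift G u q.1 q.2).2.1⟩
  left_inv p := Subtype.ext (unlift_lift G u p.1 p.2 _)
  right_inv q := Subtype.ext (lift_unlift G u q.1 q.2 _)

theorem toBase_iso (G : FinDigraph) (u : G.V) :
    InTreeIso G u (base G) (G.fibClass u) := by
  refine ⟨toBase G u, Subtype.ext rfl, fun p => (lift G u p.1 p.2).2.2.2, ?_⟩
  intro p
  obtain ⟨l, hl⟩ := p
  cases l with
  | nil =>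
      have h1 : G.parent u ⟨[], hl⟩ = ⟨[], hl⟩ := rfl
      rw [h1]
      exact (parent_of_nil _ rfl).symm
  | cons e es =>
      apply Subtype.ext
      rw [parent_val]
      show (lift G u es hl.1).1 = ((lift G u (e :: es) hl).1).tail
      rw [lift_cons]
      rfl

end FinDigraph

/-- the input tree of every node `u` of `G` is isomorphic to the input
tree of its fiber `[u]` in the minimal base `B`; consequently `G` and `B` realize the
same input-tree isomorphism types. -/


theorem inTree_of_base (G : FinDigraph) :
    (∀ u : G.V, FinDigraph.InTreeIso G u (FinDigraph.base G) (FinDigraph.fibClass G u)) ∧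
    (∀ b : (FinDigraph.base G).V,
      ∃ u : G.V, FinDigraph.InTreeIso G u (FinDigraph.base G) b) := by
  constructor
  · exact fun u => FinDigraph.toBase_iso G u
  · intro b
    refine ⟨b.out, ?_⟩
    have h := FinDigraph.toBase_iso G b.out
    have hb : FinDigraph.fibClass G b.out = b := Quotient.out_eq b
    rwa [hb] at h
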